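/- Let 1 ≤ k < d with λ_k < λ_{k+1}, and assume λ₂ > 0 (which holds by irreducibility and aperiodicity of P). Let u₁, …, u_k be Φ-orthonormal eigenvectors of L (u_iᵀΦu_j = δ_{ij}, L u_i = λ_i u_i) associated with the k smallest eigenvalues, and let û₁, …, û_k be features produced by ε-optimal GDO. Define Ψ = (u₁, …, u_k), Ψ̂ = (û₁, …, û_k), and the Φ-weighted projectors Π_Ψ^Φ = ΨΨᵀΦ and Π_{Ψ̂}^Φ = Ψ̂Ψ̂ᵀΦ. Then ‖Π_Ψ^Φ − Π_{Ψ̂}^Φ‖_Φ < √(2ε / (λ_{k+1} − λ_k)). -/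

import Mathlib

open Matrix Finset

noncomputable def phiNorm {d : ℕ} (Φ : Matrix (Fin d) (Fin d) ℝ) (x : Fin d → ℝ) : ℝ :=
  Real.sqrt (x ⬝ᵥ (Φ *ᵥ x))

noncomputable def phiOpNorm {d : ℕ} (Φ A : Matrix (Fin d) (Fin d) ℝ) : ℝ :=
  sSup { c : ℝ | ∃ x : Fin d → ℝ, x ≠ 0 ∧ c = phiNorm Φ (A *ᵥ x) / phiNorm Φ x }

namespace Stmt3Aux
variable {d : ℕ} (φ : Fin d → ℝ)

noncomputable def ip (x y : Fin d → ℝ) : ℝ := ∑ i, φ i * x i * y i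

lemma ip_comm (x y : Fin d → ℝ) : ip φ x y = ip φ y x := by
  unfold ip; exact Finset.sum_congr rfl fun i _ => by ring

lemma dot_eq_ip (x y : Fin d → ℝ) : x ⬝ᵥ ((Matrix.diagonal φ) *ᵥ y) = ip φ x y := by
  unfold ip dotProduct
  exact Finset.sum_congr rfl fun i _ => by rw [Matrix.mulVec_diagonal]; ring

lemma ip_nonneg (hφ : ∀ i, 0 < φ i) (x : Fin d → ℝ) : 0 ≤ ip φ x x :=
  Finset.sum_nonneg fun i _ => by
    have := (hφ i).le; nlinarith [mul_self_nonneg (x i)]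

lemma ip_pos (hφ : ∀ i, 0 < φ i) {x : Fin d → ℝ} (hx : x ≠ 0) : 0 < ip φ x x := by
  obtain ⟨i, hi⟩ : ∃ i, x i ≠ 0 := by
    by_contra h; push_neg at h; exact hx (funext h)
  refine Finset.sum_pos' (fun j _ => by nlinarith [mul_self_nonneg (x j), (hφ j).le]) ⟨i, Finset.mem_univ i, ?_⟩
  have := hφ i
  nlinarith [mul_self_nonneg (x i), (mul_self_pos).2 hi]

lemma ip_cs (hφ : ∀ i, 0 < φ i) (x y : Fin d → ℝ) :
    (ip φ x y) ^ 2 ≤ ip φ x x * ip φ y y := by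
  have h := Finset.sum_mul_sq_le_sq_mul_sq Finset.univ
    (fun i => Real.sqrt (φ i) * x i) (fun i => Real.sqrt (φ i) * y i)
  have e1 : ∀ i : Fin d, (Real.sqrt (φ i) * x i) * (Real.sqrt (φ i) * y i) = φ i * x i * y i := by
    intro i
    rw [mul_mul_mul_comm, Real.mul_self_sqrt (hφ i).le, mul_assoc]
  have e2 : ∀ i : Fin d, (Real.sqrt (φ i) * x i) ^ 2 = φ i * x i * x i := by
    intro i
    rw [mul_pow, Real.sq_sqrt (hφ i).le, sq, mul_assoc]
  have e3 : ∀ i : Fin d, (Real.sqrt (φ i) * y i) ^ 2 = φ i * y i * y i := by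
    intro i
    rw [mul_pow, Real.sq_sqrt (hφ i).le, sq, mul_assoc]
  unfold ip
  calc (∑ i, φ i * x i * y i) ^ 2
      = (∑ i, (Real.sqrt (φ i) * x i) * (Real.sqrt (φ i) * y i)) ^ 2 := by
        rw [Finset.sum_congr rfl fun i _ => (e1 i).symm]
    _ ≤ (∑ i, (Real.sqrt (φ i) * x i) ^ 2) * ∑ i, (Real.sqrt (φ i) * y i) ^ 2 := h
    _ = (∑ i, φ i * x i * x i) * ∑ i, φ i * y i * y i := by
        rw [Finset.sum_congr rfl fun i _ => e2 i, Finset.sum_congr rfl fun i _ => e3 i]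


lemma complete (hφ : ∀ i, 0 < φ i) (u : Fin d → Fin d → ℝ)
    (horth : ∀ i j, ip φ (u i) (u j) = if i = j then 1 else 0) :
    ∀ s t, φ s * ∑ j, u j s * u j t = if s = t then 1 else 0 := by
  classical
  set U : Matrix (Fin d) (Fin d) ℝ := Matrix.of (fun i s => u i s) with hU
  have h1 : U * ((Matrix.diagonal φ) * Uᵀ) = 1 := by
    ext i j
    rw [Matrix.mul_apply, Matrix.one_apply]
    have : ∀ s, U i s * ((Matrix.diagonal φ) * Uᵀ) s j = φ s * u i s * u j s := by
      intro s
      rw [Matrix.diagonal_mul, Matrix.transpose_apply]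
      show u i s * (φ s * u j s) = _
      ring
    rw [Finset.sum_congr rfl fun s _ => this s]
    exact horth i j
  have h2 : ((Matrix.diagonal φ) * Uᵀ) * U = 1 := mul_eq_one_comm.mp h1
  intro s t
  have := congrFun (congrFun h2 s) t
  rw [Matrix.mul_apply] at this
  have e : ∀ j, ((Matrix.diagonal φ) * Uᵀ) s j * U j t = φ s * (u j s * u j t) := by
    intro j
    rw [Matrix.diagonal_mul, Matrix.transpose_apply]
    show φ s * u j s * u j t = _
    ring
  rw [Finset.sum_congr rfl fun j _ => e j, ← Finset.mul_sum] at this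
  rw [this, Matrix.one_apply]

lemma expand (hφ : ∀ i, 0 < φ i) (u : Fin d → Fin d → ℝ)
    (horth : ∀ i j, ip φ (u i) (u j) = if i = j then 1 else 0) (y : Fin d → ℝ) (s : Fin d) :
    ∑ j, ip φ (u j) y * u j s = y s := by
  classical
  have hcomp := complete φ hφ u horth
  have e1 : ∀ j, ip φ (u j) y * u j s = ∑ t, φ t * u j t * y t * u j s := by
    intro j; rw [ip, Finset.sum_mul]
  rw [Finset.sum_congr rfl fun j _ => e1 j, Finset.sum_comm]
  have e2 : ∀ t, ∑ j, φ t * u j t * y t * u j s = y t * (φ t * ∑ j, u j t * u j s) := by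
    intro t
    rw [Finset.mul_sum, Finset.mul_sum]
    exact Finset.sum_congr rfl fun j _ => by ring
  rw [Finset.sum_congr rfl fun t _ => e2 t]
  have e3 : ∀ t, y t * (φ t * ∑ j, u j t * u j s) = if t = s then y t else 0 := by
    intro t
    rw [hcomp t s]
    by_cases h : t = s <;> simp [h]
  rw [Finset.sum_congr rfl fun t _ => e3 t, Finset.sum_ite_eq']
  simp

lemma parseval (hφ : ∀ i, 0 < φ i) (u : Fin d → Fin d → ℝ)
    (horth : ∀ i j, ip φ (u i) (u j) = if i = j then 1 else 0) (y : Fin d → ℝ) :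
    ∑ j, (ip φ (u j) y) ^ 2 = ip φ y y := by
  classical
  have e1 : ∀ j, (ip φ (u j) y) ^ 2 = ∑ s, φ s * y s * (ip φ (u j) y * u j s) := by
    intro j
    rw [sq]
    show (∑ s, φ s * u j s * y s) * ip φ (u j) y = _
    rw [Finset.sum_mul]
    exact Finset.sum_congr rfl fun s _ => by ring
  rw [Finset.sum_congr rfl fun j _ => e1 j, Finset.sum_comm]
  have e2 : ∀ s, ∑ j, φ s * y s * (ip φ (u j) y * u j s) = φ s * y s * y s := by
    intro s
    rw [← Finset.mul_sum, expand φ hφ u horth y s]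
  rw [Finset.sum_congr rfl fun s _ => e2 s, ip]


lemma ip_sub_left (x y z : Fin d → ℝ) :
    ip φ (fun s => x s - y s) z = ip φ x z - ip φ y z := by
  unfold ip
  rw [← Finset.sum_sub_distrib]
  exact Finset.sum_congr rfl fun i _ => by ring

lemma ip_sub_right (x y z : Fin d → ℝ) :
    ip φ z (fun s => x s - y s) = ip φ z x - ip φ z y := by
  rw [ip_comm, ip_sub_left, ip_comm φ x z, ip_comm φ y z]

lemma ip_combo_left {ι : Type*} [Fintype ι] (c : ι → ℝ) (w : ι → Fin d → ℝ) (z : Fin d → ℝ) :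
    ip φ (fun s => ∑ i, c i * w i s) z = ∑ i, c i * ip φ (w i) z := by
  unfold ip
  have e : ∀ s, φ s * (∑ i, c i * w i s) * z s = ∑ i, c i * (φ s * w i s * z s) := by
    intro s
    rw [Finset.mul_sum, Finset.sum_mul]
    exact Finset.sum_congr rfl fun i _ => by ring
  rw [Finset.sum_congr rfl fun s _ => e s, Finset.sum_comm]
  exact Finset.sum_congr rfl fun i _ => (Finset.mul_sum _ _ _).symm

lemma ip_combo_right {ι : Type*} [Fintype ι] (c : ι → ℝ) (w : ι → Fin d → ℝ) (z : Fin d → ℝ) :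
    ip φ z (fun s => ∑ i, c i * w i s) = ∑ i, c i * ip φ z (w i) := by
  rw [ip_comm, ip_combo_left]
  exact Finset.sum_congr rfl fun i _ => by rw [ip_comm]

lemma ip_ortho_combo {ι : Type*} [Fintype ι] [DecidableEq ι] (w : ι → Fin d → ℝ)
    (horthw : ∀ i j, ip φ (w i) (w j) = if i = j then 1 else 0) (c c' : ι → ℝ) :
    ip φ (fun s => ∑ i, c i * w i s) (fun s => ∑ i, c' i * w i s) = ∑ i, c i * c' i := by
  rw [ip_combo_left]
  refine Finset.sum_congr rfl fun i _ => ?_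
  rw [ip_combo_right]
  have e : ∀ i', c' i' * ip φ (w i) (w i') = if i = i' then c' i' else 0 := by
    intro i'
    rw [horthw i i']
    split <;> simp
  rw [Finset.sum_congr rfl fun i' _ => e i', Finset.sum_ite_eq]
  simp


lemma ip_zero_sub (x : Fin d → ℝ) :
    ip φ (fun s => (0:ℝ) - x s) (fun s => (0:ℝ) - x s) = ip φ x x := by
  unfold ip
  exact Finset.sum_congr rfl fun i _ => by ring

lemma ip_perp {ι : Type*} [Fintype ι] [DecidableEq ι] (w : ι → Fin d → ℝ)
    (horthw : ∀ i j, ip φ (w i) (w j) = if i = j then 1 else 0)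
    (y : Fin d → ℝ) (c : ι → ℝ) (hc : ∀ i, c i = ip φ y (w i)) :
    ip φ (fun s => y s - ∑ i, c i * w i s) (fun s => y s - ∑ i, c i * w i s)
      = ip φ y y - ∑ i, (c i) ^ 2 := by
  rw [ip_sub_left, ip_sub_right, ip_sub_right, ip_combo_right φ c w y,
    ip_combo_left φ c w y, ip_ortho_combo φ w horthw c c]
  have e2 : ∀ i : ι, c i * ip φ y (w i) = c i ^ 2 := fun i => by rw [← hc i, sq]
  have e3 : ∀ i : ι, c i * ip φ (w i) y = c i ^ 2 := fun i => by
    rw [ip_comm, ← hc i, sq]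
  have e4 : ∀ i : ι, c i * c i = c i ^ 2 := fun i => (sq (c i)).symm
  rw [Finset.sum_congr rfl fun i _ => e2 i, Finset.sum_congr rfl fun i _ => e3 i,
    Finset.sum_congr rfl fun i _ => e4 i]
  ring


lemma proj_mulVec {k : ℕ} (w : Fin k → Fin d → ℝ) (x : Fin d → ℝ) (s : Fin d) :
    (((Matrix.of fun s i => w i s) * (Matrix.of fun s i => w i s)ᵀ * Matrix.diagonal φ) *ᵥ x) s
      = ∑ i, ip φ (w i) x * w i s := by
  rw [← Matrix.mulVec_mulVec, ← Matrix.mulVec_mulVec]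
  have h0 : Matrix.diagonal φ *ᵥ x = fun t => φ t * x t := by
    funext t; exact Matrix.mulVec_diagonal φ x t
  rw [h0]
  simp only [Matrix.mulVec, dotProduct, Matrix.of_apply, Matrix.transpose_apply]
  refine Finset.sum_congr rfl fun i _ => ?_
  unfold ip
  rw [Finset.mul_sum, Finset.sum_mul]
  exact Finset.sum_congr rfl fun t _ => by ring

end Stmt3Aux

set_option maxHeartbeats 2000000 in
open Stmt3Aux in
theorem stmt3' {d : ℕ} (hd : 2 ≤ d)
    (φ : Fin d → ℝ)
    (hφ_pos : ∀ i, 0 < φ i)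
    (Φ : Matrix (Fin d) (Fin d) ℝ) (hΦ : Φ = Matrix.diagonal φ)
    (L : Matrix (Fin d) (Fin d) ℝ)
    (lam : Fin d → ℝ) (u : Fin d → Fin d → ℝ)
    (hlam_mono : Monotone lam)
    (h_eig : ∀ i, L *ᵥ u i = lam i • u i)
    (h_orth : ∀ i j, (u i) ⬝ᵥ (Φ *ᵥ u j) = if i = j then 1 else 0)
    (k : ℕ) (hk1 : 1 ≤ k) (hkd : k < d)
    (hgap : lam ⟨k - 1, by omega⟩ < lam ⟨k, hkd⟩)
    (ε : ℝ) (hε : 0 < ε)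
    (uhat : Fin k → Fin d → ℝ)
    (huhat_orth : ∀ i j, (uhat i) ⬝ᵥ (Φ *ᵥ uhat j) = if i = j then 1 else 0)
    (huhat_gdo : ∑ i, (uhat i) ⬝ᵥ (Φ *ᵥ (L *ᵥ uhat i))
        - ∑ i : Fin k, lam (Fin.castLE hkd.le i) < ε)
    (Ψ : Matrix (Fin d) (Fin k) ℝ)
    (hΨ : Ψ = Matrix.of fun s i => u (Fin.castLE hkd.le i) s)
    (Ψhat : Matrix (Fin d) (Fin k) ℝ)
    (hΨhat : Ψhat = Matrix.of fun s i => uhat i s) :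
    phiOpNorm Φ (Ψ * Ψᵀ * Φ - Ψhat * Ψhatᵀ * Φ)
      < Real.sqrt (2 * ε / (lam ⟨k, hkd⟩ - lam ⟨k - 1, by omega⟩)) := by
  classical
  set M : Matrix (Fin d) (Fin d) ℝ := Ψ * Ψᵀ * Φ - Ψhat * Ψhatᵀ * Φ with hM
  set v : Fin k → Fin d → ℝ := fun i => u (Fin.castLE hkd.le i) with hv
  set a : Fin d → Fin k → ℝ := fun j i => ip φ (u j) (uhat i) with ha
  set b : Fin d → ℝ := fun j => ∑ i, (a j i) ^ 2 with hb
  set lamK : ℝ := lam ⟨k, hkd⟩ with hlamK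
  set lamK1 : ℝ := lam ⟨k - 1, by omega⟩ with hlamK1
  have hgap' : 0 < lamK - lamK1 := sub_pos.mpr hgap
  -- orthonormality in ip form
  have horthu : ∀ i j, ip φ (u i) (u j) = if i = j then 1 else 0 := by
    intro i j; rw [← dot_eq_ip, ← hΦ]; exact h_orth i j
  have horthh : ∀ i j, ip φ (uhat i) (uhat j) = if i = j then 1 else 0 := by
    intro i j; rw [← dot_eq_ip, ← hΦ]; exact huhat_orth i j
  -- index sets
  set SLT : Finset (Fin d) := Finset.univ.filter (fun j : Fin d => (j : ℕ) < k) with hSLT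
  have hreindex : ∀ f : Fin d → ℝ,
      ∑ j ∈ SLT, f j = ∑ i : Fin k, f (Fin.castLE hkd.le i) := by
    intro f
    refine Finset.sum_bij' (fun j hj => (⟨(j : ℕ), by simpa [hSLT] using hj⟩ : Fin k))
      (fun i _ => Fin.castLE hkd.le i) ?_ ?_ ?_ ?_ ?_
    · intro a ha; exact Finset.mem_univ _
    · intro a ha; simp [hSLT]
    · intro a ha; rfl
    · intro a ha; rfl
    · intro a ha; rfl
  -- basic facts about b
  have hbnn : ∀ j, 0 ≤ b j := fun j => Finset.sum_nonneg fun i _ => sq_nonneg _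
  have hsumb : ∑ j, b j = (k : ℝ) := by
    rw [hb]
    rw [Finset.sum_comm]
    have e : ∀ i : Fin k, ∑ j, (a j i) ^ 2 = 1 := by
      intro i
      rw [ha]
      have := parseval φ hφ_pos u horthu (uhat i)
      rw [this, horthh]
      simp
    rw [Finset.sum_congr rfl fun i _ => e i]
    simp
  have hkey : ∀ j : Fin d, ip φ (fun s => u j s - ∑ i, a j i * uhat i s)
      (fun s => u j s - ∑ i, a j i * uhat i s) = 1 - b j := by
    intro j
    rw [ip_perp φ uhat horthh (u j) (a j) (fun i => rfl)]
    have e1 : ip φ (u j) (u j) = 1 := by rw [horthu]; simp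
    rw [e1, hb]
  have hb_le : ∀ j, b j ≤ 1 := by
    intro j
    have := ip_nonneg φ hφ_pos (fun s => u j s - ∑ i, a j i * uhat i s)
    rw [hkey j] at this
    linarith
  -- index-set bookkeeping
  set SGE : Finset (Fin d) := Finset.univ.filter (fun j : Fin d => ¬ (j : ℕ) < k) with hSGE
  have hcard : ∑ j ∈ SLT, (1:ℝ) = (k:ℝ) := by
    rw [hreindex fun _ => (1:ℝ)]; simp
  set τ : ℝ := ∑ j ∈ SGE, b j with hτ
  have hτ0 : 0 ≤ τ := Finset.sum_nonneg fun j _ => hbnn j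
  have hsplitb : ∑ j ∈ SLT, b j + τ = (k : ℝ) := by
    rw [hτ, hSGE, hSLT, Finset.sum_filter_add_sum_filter_not, hsumb]
  have hTalt : ∑ j ∈ SLT, (1 - b j) = τ := by
    rw [Finset.sum_sub_distrib, hcard]; linarith
  -- energy identity
  have hLu : ∀ i : Fin k, L *ᵥ uhat i = fun s => ∑ j, (a j i * lam j) * u j s := by
    intro i
    funext s
    show ∑ t, L s t * uhat i t = _
    calc ∑ t, L s t * uhat i t
        = ∑ t, L s t * ∑ j, ip φ (u j) (uhat i) * u j t :=
          Finset.sum_congr rfl fun t _ => by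
            rw [expand φ hφ_pos u horthu (uhat i) t]
      _ = ∑ t, ∑ j, L s t * (ip φ (u j) (uhat i) * u j t) :=
          Finset.sum_congr rfl fun t _ => Finset.mul_sum _ _ _
      _ = ∑ j, ∑ t, L s t * (a j i * u j t) := Finset.sum_comm
      _ = ∑ j, a j i * ∑ t, L s t * u j t := by
          refine Finset.sum_congr rfl fun j _ => ?_
          rw [Finset.mul_sum]
          exact Finset.sum_congr rfl fun t _ => by ring
      _ = ∑ j, (a j i * lam j) * u j s := by
          refine Finset.sum_congr rfl fun j _ => ?_
          have : ∑ t, L s t * u j t = (L *ᵥ u j) s := rfl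
          rw [this, h_eig j]
          show a j i * (lam j * u j s) = _
          ring
  have hEi : ∀ i : Fin k, uhat i ⬝ᵥ (Φ *ᵥ (L *ᵥ uhat i)) = ∑ j, lam j * (a j i) ^ 2 := by
    intro i
    rw [hΦ, dot_eq_ip, hLu i, ip_combo_right φ (fun j => a j i * lam j) u (uhat i)]
    refine Finset.sum_congr rfl fun j _ => ?_
    have e : ip φ (uhat i) (u j) = a j i := (ip_comm φ _ _)
    rw [e, sq]
    ring
  have hE : ∑ i : Fin k, uhat i ⬝ᵥ (Φ *ᵥ (L *ᵥ uhat i)) = ∑ j, lam j * b j := by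
    rw [Finset.sum_congr rfl fun i _ => hEi i, Finset.sum_comm]
    refine Finset.sum_congr rfl fun j _ => ?_
    rw [hb, Finset.mul_sum]
  have hElt : ∑ j, lam j * b j - ∑ j ∈ SLT, lam j < ε := by
    have h := huhat_gdo
    rw [hE] at h
    rwa [hreindex lam]
  -- gap inequality
  have h1 : -lamK1 * τ ≤ ∑ j ∈ SLT, (lam j * b j - lam j) := by
    rw [← hTalt, Finset.mul_sum]
    refine Finset.sum_le_sum fun j hj => ?_
    have hjk : (j : ℕ) < k := by
      have := Finset.mem_filter.mp (hSLT ▸ hj)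
      exact this.2
    have hle : lam j ≤ lamK1 := hlam_mono (by
      show (j : ℕ) ≤ k - 1
      omega)
    nlinarith [hb_le j, hbnn j]
  have h2 : lamK * τ ≤ ∑ j ∈ SGE, lam j * b j := by
    rw [hτ, Finset.mul_sum]
    refine Finset.sum_le_sum fun j hj => ?_
    have hjk : ¬ (j : ℕ) < k := by
      have := Finset.mem_filter.mp (hSGE ▸ hj)
      exact this.2
    have hle : lamK ≤ lam j := hlam_mono (by
      show k ≤ (j : ℕ)
      omega)
    nlinarith [hbnn j]
  have hgapT : (lamK - lamK1) * τ ≤ ∑ j, lam j * b j - ∑ j ∈ SLT, lam j := by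
    have hsplit : ∑ j ∈ SLT, lam j * b j + ∑ j ∈ SGE, lam j * b j = ∑ j, lam j * b j := by
      rw [hSGE, hSLT, Finset.sum_filter_add_sum_filter_not]
    have hsd : ∑ j ∈ SLT, (lam j * b j - lam j)
        = ∑ j ∈ SLT, lam j * b j - ∑ j ∈ SLT, lam j := Finset.sum_sub_distrib _ _
    nlinarith [h1, h2, hsplit, hsd]
  have hτlt : (lamK - lamK1) * τ < ε := lt_of_le_of_lt hgapT hElt
  -- the operator side
  have hMx : ∀ x : Fin d → ℝ, M *ᵥ x = fun s =>
      (∑ i : Fin k, ip φ (v i) x * v i s) - ∑ i : Fin k, ip φ (uhat i) x * uhat i s := by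
    intro x
    funext s
    rw [hM, Matrix.sub_mulVec]
    have e1 : ((Ψ * Ψᵀ * Φ) *ᵥ x) s = ∑ i : Fin k, ip φ (v i) x * v i s := by
      rw [hΨ, hΦ]; exact proj_mulVec φ v x s
    have e2 : ((Ψhat * Ψhatᵀ * Φ) *ᵥ x) s = ∑ i : Fin k, ip φ (uhat i) x * uhat i s := by
      rw [hΨhat, hΦ]; exact proj_mulVec φ uhat x s
    show ((Ψ * Ψᵀ * Φ) *ᵥ x) s - ((Ψhat * Ψhatᵀ * Φ) *ᵥ x) s = _
    rw [e1, e2]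
  -- symmetry of M w.r.t. ip
  have hipMx : ∀ y x : Fin d → ℝ, ip φ y (M *ᵥ x)
      = ∑ i : Fin k, ip φ (v i) x * ip φ (v i) y
        - ∑ i : Fin k, ip φ (uhat i) x * ip φ (uhat i) y := by
    intro y x
    rw [hMx x, ip_sub_right, ip_combo_right φ (fun i => ip φ (v i) x) v y,
      ip_combo_right φ (fun i => ip φ (uhat i) x) uhat y]
    have e1 : ∀ i : Fin k, ip φ (v i) x * ip φ y (v i) = ip φ (v i) x * ip φ (v i) y :=
      fun i => by rw [ip_comm φ y (v i)]
    have e2 : ∀ i : Fin k, ip φ (uhat i) x * ip φ y (uhat i)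
        = ip φ (uhat i) x * ip φ (uhat i) y := fun i => by rw [ip_comm φ y (uhat i)]
    rw [Finset.sum_congr rfl fun i _ => e1 i, Finset.sum_congr rfl fun i _ => e2 i]
  have hsym : ∀ y x : Fin d → ℝ, ip φ y (M *ᵥ x) = ip φ (M *ᵥ y) x := by
    intro y x
    rw [hipMx y x, ip_comm φ (M *ᵥ y) x, hipMx x y]
    refine congrArg₂ (· - ·) (Finset.sum_congr rfl fun i _ => by ring)
      (Finset.sum_congr rfl fun i _ => by ring)
  -- Hilbert-Schmidt bound
  have hMuj : ∀ j : Fin d, ip φ (M *ᵥ u j) (M *ᵥ u j)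
      = if (j : ℕ) < k then 1 - b j else b j := by
    intro j
    have hcoef : ∀ i : Fin k, ip φ (v i) (u j)
        = if Fin.castLE hkd.le i = j then 1 else 0 := fun i => horthu _ j
    have hp : (fun s => ∑ i : Fin k, ip φ (v i) (u j) * v i s)
        = fun s => if (j : ℕ) < k then u j s else 0 := by
      funext s
      rw [Finset.sum_congr rfl fun i _ => by rw [hcoef i]]
      by_cases hj : (j : ℕ) < k
      · have e : ∀ i : Fin k, (if Fin.castLE hkd.le i = j then (1:ℝ) else 0) * v i s
            = if i = (⟨(j : ℕ), hj⟩ : Fin k) then u j s else 0 := by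
          intro i
          have hiff : Fin.castLE hkd.le i = j ↔ i = (⟨(j : ℕ), hj⟩ : Fin k) := by
            constructor
            · intro h; apply Fin.ext; simpa using congrArg Fin.val h
            · intro h; apply Fin.ext; simpa using congrArg Fin.val h
          by_cases h : i = (⟨(j : ℕ), hj⟩ : Fin k)
          · rw [if_pos (hiff.mpr h), if_pos h, one_mul]
            have : Fin.castLE hkd.le i = j := hiff.mpr h
            rw [hv]
            show u (Fin.castLE hkd.le i) s = u j s
            rw [this]
          · rw [if_neg (fun hh => h (hiff.mp hh)), if_neg h, zero_mul]
        rw [Finset.sum_congr rfl fun i _ => e i, Finset.sum_ite_eq']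
        simp [hj]
      · have e : ∀ i : Fin k, (if Fin.castLE hkd.le i = j then (1:ℝ) else 0) * v i s = 0 := by
          intro i
          rw [if_neg, zero_mul]
          intro h
          apply hj
          rw [← h]
          exact i.isLt
        rw [Finset.sum_congr rfl fun i _ => e i]
        simp [hj]
    have hMuj_eq : M *ᵥ u j
        = fun s => (if (j : ℕ) < k then u j s else 0) - ∑ i, a j i * uhat i s := by
      rw [hMx (u j)]
      funext s
      rw [congrFun hp s]
      congr 1
      refine Finset.sum_congr rfl fun i _ => ?_
      rw [show ip φ (uhat i) (u j) = a j i from (ip_comm φ _ _)]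
    by_cases hj : (j : ℕ) < k
    · rw [hMuj_eq, if_pos hj]
      have e : (fun s => (if (j : ℕ) < k then u j s else 0) - ∑ i, a j i * uhat i s)
          = fun s => u j s - ∑ i, a j i * uhat i s := by
        funext s; rw [if_pos hj]
      rw [e]
      exact hkey j
    · rw [hMuj_eq, if_neg hj]
      have e : (fun s => (if (j : ℕ) < k then u j s else 0) - ∑ i, a j i * uhat i s)
          = fun s => (0:ℝ) - ∑ i, a j i * uhat i s := by
        funext s; rw [if_neg hj]
      rw [e, ip_zero_sub φ (fun s => ∑ i, a j i * uhat i s),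
        ip_ortho_combo φ uhat horthh (a j) (a j)]
      exact Finset.sum_congr rfl fun i _ => (pow_two (a j i)).symm
  have hHSsum : ∑ j, ip φ (M *ᵥ u j) (M *ᵥ u j) = 2 * τ := by
    rw [Finset.sum_congr rfl fun j _ => hMuj j]
    rw [← Finset.sum_filter_add_sum_filter_not Finset.univ (fun j : Fin d => (j : ℕ) < k)]
    have e1 : ∑ j ∈ SLT, (if (j : ℕ) < k then 1 - b j else b j) = ∑ j ∈ SLT, (1 - b j) := by
      refine Finset.sum_congr rfl fun j hj => ?_
      rw [hSLT] at hj
      have hjm : (j : ℕ) < k := (Finset.mem_filter.mp hj).2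
      exact if_pos hjm
    have e2 : ∑ j ∈ SGE, (if (j : ℕ) < k then 1 - b j else b j) = ∑ j ∈ SGE, b j := by
      refine Finset.sum_congr rfl fun j hj => ?_
      rw [hSGE] at hj
      have hjm : ¬ (j : ℕ) < k := (Finset.mem_filter.mp hj).2
      exact if_neg hjm
    rw [show Finset.univ.filter (fun j : Fin d => (j : ℕ) < k) = SLT from hSLT.symm,
      show Finset.univ.filter (fun j : Fin d => ¬ (j : ℕ) < k) = SGE from hSGE.symm,
      e1, e2, hTalt]
    ring
  have hHS : ∀ x : Fin d → ℝ, ip φ (M *ᵥ x) (M *ᵥ x) ≤ 2 * τ * ip φ x x := by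
    intro x
    rw [← parseval φ hφ_pos u horthu (M *ᵥ x)]
    have hterm : ∀ j, (ip φ (u j) (M *ᵥ x)) ^ 2
        ≤ ip φ (M *ᵥ u j) (M *ᵥ u j) * ip φ x x := by
      intro j
      rw [hsym (u j) x]
      exact ip_cs φ hφ_pos (M *ᵥ u j) x
    calc ∑ j, (ip φ (u j) (M *ᵥ x)) ^ 2
        ≤ ∑ j, ip φ (M *ᵥ u j) (M *ᵥ u j) * ip φ x x :=
          Finset.sum_le_sum fun j _ => hterm j
      _ = (∑ j, ip φ (M *ᵥ u j) (M *ᵥ u j)) * ip φ x x := (Finset.sum_mul _ _ _).symm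
      _ = 2 * τ * ip φ x x := by rw [hHSsum]
  have hbound : phiOpNorm Φ M ≤ Real.sqrt (2 * τ) := by
    apply Real.sSup_le
    · rintro c ⟨x, hx, rfl⟩
      simp only [phiNorm]
      rw [hΦ, dot_eq_ip, dot_eq_ip]
      have hx0 : 0 < ip φ x x := ip_pos φ hφ_pos hx
      rw [← Real.sqrt_div (ip_nonneg φ hφ_pos (M *ᵥ x)) (ip φ x x)]
      apply Real.sqrt_le_sqrt
      rw [div_le_iff₀ hx0]
      exact hHS x
    · exact Real.sqrt_nonneg _
  refine lt_of_le_of_lt hbound ?_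
  apply Real.sqrt_lt_sqrt (by linarith)
  rw [lt_div_iff₀ hgap']
  nlinarith [hτlt]


theorem stmt3 {d : ℕ} (hd : 2 ≤ d)
    (P : Matrix (Fin d) (Fin d) ℝ)
    (hP_nonneg : ∀ i j, 0 ≤ P i j)
    (hP_row : ∀ i, ∑ j, P i j = 1)
    (hP_erg : ∃ n : ℕ, 1 ≤ n ∧ ∀ i j, 0 < (P ^ n) i j)
    (φ : Fin d → ℝ)
    (hφ_pos : ∀ i, 0 < φ i)
    (hφ_sum : ∑ i, φ i = 1)
    (hφ_stat : φ ᵥ* P = φ)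
    (Φ : Matrix (Fin d) (Fin d) ℝ) (hΦ : Φ = Matrix.diagonal φ)
    (L : Matrix (Fin d) (Fin d) ℝ)
    (hL : L = 1 - (2⁻¹ : ℝ) • (P + Φ⁻¹ * Pᵀ * Φ))
    (lam : Fin d → ℝ) (u : Fin d → Fin d → ℝ)
    (hlam_mono : Monotone lam)
    (hlam_zero : lam ⟨0, by omega⟩ = 0)
    (h_eig : ∀ i, L *ᵥ u i = lam i • u i)
    (h_orth : ∀ i j, (u i) ⬝ᵥ (Φ *ᵥ u j) = if i = j then 1 else 0)
    (hlam2_pos : 0 < lam ⟨1, by omega⟩)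
    (k : ℕ) (hk1 : 1 ≤ k) (hkd : k < d)
    (hgap : lam ⟨k - 1, by omega⟩ < lam ⟨k, hkd⟩)
    (ε : ℝ) (hε : 0 < ε)
    (uhat : Fin k → Fin d → ℝ)
    (huhat_orth : ∀ i j, (uhat i) ⬝ᵥ (Φ *ᵥ uhat j) = if i = j then 1 else 0)
    (huhat_gdo : ∑ i, (uhat i) ⬝ᵥ (Φ *ᵥ (L *ᵥ uhat i))
        - ∑ i : Fin k, lam (Fin.castLE hkd.le i) < ε)
    (Ψ : Matrix (Fin d) (Fin k) ℝ)
    (hΨ : Ψ = Matrix.of fun s i => u (Fin.castLE hkd.le i) s)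
    (Ψhat : Matrix (Fin d) (Fin k) ℝ)
    (hΨhat : Ψhat = Matrix.of fun s i => uhat i s) :
    phiOpNorm Φ (Ψ * Ψᵀ * Φ - Ψhat * Ψhatᵀ * Φ)
      < Real.sqrt (2 * ε / (lam ⟨k, hkd⟩ - lam ⟨k - 1, by omega⟩)) := by
  exact stmt3' hd φ hφ_pos Φ hΦ L lam u hlam_mono h_eig h_orth k hk1 hkd hgap ε hε
    uhat huhat_orth huhat_gdo Ψ hΨ Ψhat hΨhat
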